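/- arXiv:1804.02857 — 3 statements merged into one kernel-verified Lean document; each statement's English description precedes it below -/
import Mathlib

section
/- The dual cone of the cone D^n of diagonally dominant symmetric matrices with nonnegative diagonal (matrices W with W_ii ≥ Σ_{j≠i}|W_ij|) equals the set of symmetric matrices W with W_ii ≥ 0 for all i and W_ii + W_jj − 2|W_ij| ≥ 0 for all i < j. -/
open Finset

lemma aux_sum_ite {n : ℕ} (W : Matrix (Fin n) (Fin n) ℝ) (p q : Fin n) (c : ℝ) :
    ∑ a, ∑ b, W a b * (if a = p ∧ b = q then c else 0) = W p q * c := by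
  simp [ite_and, mul_ite, Finset.sum_ite_eq, Finset.sum_ite_eq']

lemma aux_swap {n : ℕ} (g : Fin n → Fin n → ℝ) :
    ∑ i, ∑ j ∈ univ.erase i, g i j = ∑ i, ∑ j ∈ univ.erase i, g j i :=
  Finset.sum_comm' (fun i j => by simp [ne_comm])

lemma aux_diag {n : ℕ} (W : Matrix (Fin n) (Fin n) ℝ)
    (h : ∀ X : Matrix (Fin n) (Fin n) ℝ, X.IsSymm →
        (∀ i, ∑ j ∈ univ.erase i, |X i j| ≤ X i i) →
        0 ≤ ∑ i, ∑ j, W i j * X i j) (i : Fin n) : 0 ≤ W i i := by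
  have hs := h (fun a b => if a = i ∧ b = i then (1:ℝ) else 0)
    (by
      ext a b
      show (if b = i ∧ a = i then (1:ℝ) else 0) = if a = i ∧ b = i then 1 else 0
      by_cases h1 : a = i <;> by_cases h2 : b = i <;> simp [h1, h2])
    (by
      intro a
      have h0 : ∑ b ∈ univ.erase a, |if a = i ∧ b = i then (1:ℝ) else 0| = 0 :=
        Finset.sum_eq_zero fun b hb => by
          rw [if_neg, abs_zero]
          rintro ⟨rfl, rfl⟩
          exact (Finset.ne_of_mem_erase hb) rfl
      rw [h0]
      show (0:ℝ) ≤ if a = i ∧ a = i then 1 else 0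
      split <;> norm_num)
  rw [aux_sum_ite] at hs
  linarith

lemma aux_pair {n : ℕ} (W : Matrix (Fin n) (Fin n) ℝ)
    (h : ∀ X : Matrix (Fin n) (Fin n) ℝ, X.IsSymm →
        (∀ i, ∑ j ∈ univ.erase i, |X i j| ≤ X i i) →
        0 ≤ ∑ i, ∑ j, W i j * X i j)
    (i j : Fin n) (hij : i ≠ j) (ε : ℝ) (hε : |ε| = 1) :
    0 ≤ W i i + W j j + W i j * ε + W j i * ε := by
  set X : Matrix (Fin n) (Fin n) ℝ := fun a b =>
    (((if a = i ∧ b = i then (1:ℝ) else 0) + (if a = j ∧ b = j then 1 else 0)) +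
    (if a = i ∧ b = j then ε else 0)) + (if a = j ∧ b = i then ε else 0) with hX
  have hXval : ∀ a b, X a b =
      (((if a = i ∧ b = i then (1:ℝ) else 0) + (if a = j ∧ b = j then 1 else 0)) +
      (if a = i ∧ b = j then ε else 0)) + (if a = j ∧ b = i then ε else 0) := fun a b => rfl
  have hsymm : X.IsSymm := by
    ext a b
    simp only [Matrix.transpose_apply, hXval]
    by_cases h1 : a = i <;> by_cases h2 : b = i <;> by_cases h3 : a = j <;>
      by_cases h4 : b = j <;>
        simp [h1, h2, h3, h4, hij, Ne.symm hij]
  have hdd : ∀ a, ∑ b ∈ univ.erase a, |X a b| ≤ X a a := by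
    intro a
    by_cases ha : a = i
    · subst ha
      have h1 : ∀ b ∈ univ.erase a, |X a b| = if b = j then (1:ℝ) else 0 := by
        intro b hb
        have hba : b ≠ a := Finset.ne_of_mem_erase hb
        by_cases hbj : b = j <;>
          simp [hXval, hba, hbj, hij, hε, (Ne.symm hba), (Ne.symm hij)]
      rw [Finset.sum_congr rfl h1, Finset.sum_ite_eq' (univ.erase a) j (fun _ => (1:ℝ))]
      have hja : j ∈ univ.erase a := Finset.mem_erase.2 ⟨Ne.symm hij, mem_univ j⟩
      simp [hja, hXval, hij, Ne.symm hij]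
    · by_cases ha' : a = j
      · subst ha'
        have h1 : ∀ b ∈ univ.erase a, |X a b| = if b = i then (1:ℝ) else 0 := by
          intro b hb
          have hba : b ≠ a := Finset.ne_of_mem_erase hb
          by_cases hbi : b = i <;>
            simp [hXval, hba, hbi, hij, hε, (Ne.symm hba), (Ne.symm hij), ha]
        rw [Finset.sum_congr rfl h1, Finset.sum_ite_eq' (univ.erase a) i (fun _ => (1:ℝ))]
        have hia : i ∈ univ.erase a := Finset.mem_erase.2 ⟨hij, mem_univ i⟩
        simp [hia, hXval, hij, Ne.symm hij, ha]
      · have h0 : ∀ b ∈ univ.erase a, |X a b| = 0 := by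
          intro b hb
          simp [hXval, ha, ha']
        rw [Finset.sum_congr rfl h0]
        simp [hXval, ha, ha']
  have hs := h X hsymm hdd
  have hexp : ∑ a, ∑ b, W a b * X a b =
      W i i * 1 + W j j * 1 + W i j * ε + W j i * ε := by
    simp only [hXval, mul_add, Finset.sum_add_distrib, aux_sum_ite]
  rw [hexp] at hs
  linarith

/-- The dual cone of the cone `D^n` of diagonally dominant symmetric matrices
(`X_ii ≥ Σ_{j≠i} |X_ij|`, which forces a nonnegative diagonal), with respect to
the trace inner product, is exactly the set of symmetric matrices `W` with
`W_ii ≥ 0` for all `i` and `W_ii + W_jj − 2|W_ij| ≥ 0` for all `i < j`. -/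
theorem stmt_4 {n : ℕ} (W : Matrix (Fin n) (Fin n) ℝ) (hW : W.IsSymm) :
    (∀ X : Matrix (Fin n) (Fin n) ℝ, X.IsSymm →
        (∀ i, ∑ j ∈ univ.erase i, |X i j| ≤ X i i) →
        0 ≤ ∑ i, ∑ j, W i j * X i j) ↔
      (∀ i, 0 ≤ W i i) ∧ ∀ i j, i < j → 0 ≤ W i i + W j j - 2 * |W i j| := by
  constructor
  · intro h
    refine ⟨aux_diag W h, fun i j hij => ?_⟩
    have hWs : W j i = W i j := hW.apply i j
    have hp := aux_pair W h i j (ne_of_lt hij) (if 0 ≤ W i j then -1 else 1)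
      (by split <;> norm_num)
    rw [hWs] at hp
    split_ifs at hp with hc
    · rw [abs_of_nonneg hc]
      linarith
    · rw [abs_of_neg (lt_of_not_ge hc)]
      linarith
  · rintro ⟨hd, hod⟩ X hXs hdd
    have hWs : ∀ a b : Fin n, W b a = W a b := fun a b => hW.apply a b
    have hXs' : ∀ a b : Fin n, X b a = X a b := fun a b => hXs.apply a b
    have key : ∀ a b : Fin n, a ≠ b → 0 ≤ W a a + W b b - 2 * |W a b| := by
      intro a b hab
      rcases lt_or_gt_of_ne hab with h' | h'
      · exact hod a b h'
      · have h2 := hod b a h'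
        rw [hWs a b] at h2
        linarith
    set f : Fin n → Fin n → ℝ := fun a b => W a a * |X a b| + W a b * X a b with hf
    have hT : 0 ≤ ∑ a, ∑ b ∈ univ.erase a, f a b := by
      have h2 : ∑ a, ∑ b ∈ univ.erase a, f a b + ∑ a, ∑ b ∈ univ.erase a, f a b
          = ∑ a, ∑ b ∈ univ.erase a, (f a b + f b a) := by
        nth_rewrite 2 [aux_swap f]
        simp only [← Finset.sum_add_distrib]
      have hpt : ∀ a : Fin n, ∀ b ∈ univ.erase a, 0 ≤ f a b + f b a := by
        intro a b hb
        have hab : b ≠ a := Finset.ne_of_mem_erase hb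
        have h1 := key a b (Ne.symm hab)
        have h3 : -( |W a b| * |X a b| ) ≤ W a b * X a b := by
          rw [← abs_mul]; exact neg_abs_le _
        simp only [hf]
        rw [hXs' a b, hWs a b]
        nlinarith [mul_nonneg h1 (abs_nonneg (X a b))]
      have hpos : 0 ≤ ∑ a, ∑ b ∈ univ.erase a, (f a b + f b a) :=
        Finset.sum_nonneg fun a _ => Finset.sum_nonneg (hpt a)
      linarith
    have hsplit : ∑ a, ∑ b, W a b * X a b
        = ∑ a, (W a a * X a a + ∑ b ∈ univ.erase a, W a b * X a b) :=
      Finset.sum_congr rfl fun a _ =>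
        (Finset.add_sum_erase univ (fun b => W a b * X a b) (mem_univ a)).symm
    rw [hsplit, Finset.sum_add_distrib]
    have h1 : ∑ a, ∑ b ∈ univ.erase a, (W a a * |X a b|) ≤ ∑ a, W a a * X a a := by
      refine Finset.sum_le_sum fun a _ => ?_
      rw [← Finset.mul_sum]
      exact mul_le_mul_of_nonneg_left (hdd a) (hd a)
    have h3 : ∑ a, ∑ b ∈ univ.erase a, f a b
        = ∑ a, ∑ b ∈ univ.erase a, (W a a * |X a b|)
          + ∑ a, ∑ b ∈ univ.erase a, (W a b * X a b) := by
      simp only [hf, Finset.sum_add_distrib]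
    linarith
end

section
/- Consider a QCQP min{xᵀQ₀x + β₀ᵀx + γ₀ : xᵀQₖx + βₖᵀx + γₖ ≤ 0, k=1,…,m} with all matrices Qₖ (k=0,…,m) having zero diagonals. Then the optimal values of its SDP relaxation, SOCP relaxation, and LP (diagonally-dominant dual cone) relaxation are equal: ζ*_SDP = ζ*_SOCP = ζ*_LP. -/
open Matrix Finset

/-- The trace inner product `A • B = Σ_{ij} A_ij B_ij`. -/
noncomputable def minner {ι : Type*} [Fintype ι] (A B : Matrix ι ι ℝ) : ℝ :=
  ∑ i, ∑ j, A i j * B i j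

/-- `Q̄ = [[γ, βᵀ/2],[β/2, Q]]`. -/
noncomputable def Qbar {n : ℕ} (Q : Matrix (Fin n) (Fin n) ℝ) (β : Fin n → ℝ)
    (γ : ℝ) : Matrix (Fin 1 ⊕ Fin n) (Fin 1 ⊕ Fin n) ℝ :=
  Matrix.fromBlocks (Matrix.of fun _ _ => γ) (Matrix.of fun _ j => β j / 2)
    (Matrix.of fun i _ => β i / 2) Q

/-- Feasibility of `W̄` in the SDP relaxation: `W̄ ⪰ 0`, `W̄_{00} = 1`, and
`Q̄ₖ • W̄ ≤ 0` for every constraint `k`. -/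
noncomputable def SDPfeas {n m : ℕ} (Q : Fin m → Matrix (Fin n) (Fin n) ℝ)
    (β : Fin m → Fin n → ℝ) (γ : Fin m → ℝ)
    (W : Matrix (Fin 1 ⊕ Fin n) (Fin 1 ⊕ Fin n) ℝ) : Prop :=
  W.PosSemidef ∧ W (Sum.inl 0) (Sum.inl 0) = 1 ∧
    ∀ k, minner (Qbar (Q k) (β k) (γ k)) W ≤ 0

/-- Feasibility in the SOCP relaxation: `W̄` symmetric, `W̄_{ii} ≥ 0`,
`W̄_{ij}² ≤ W̄_{ii} W̄_{jj}`, `W̄_{00} = 1`, and `Q̄ₖ • W̄ ≤ 0`. -/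
noncomputable def SOCPfeas {n m : ℕ} (Q : Fin m → Matrix (Fin n) (Fin n) ℝ)
    (β : Fin m → Fin n → ℝ) (γ : Fin m → ℝ)
    (W : Matrix (Fin 1 ⊕ Fin n) (Fin 1 ⊕ Fin n) ℝ) : Prop :=
  W.IsSymm ∧ (∀ i, 0 ≤ W i i) ∧ (∀ i j, (W i j) ^ 2 ≤ W i i * W j j) ∧
    W (Sum.inl 0) (Sum.inl 0) = 1 ∧
    ∀ k, minner (Qbar (Q k) (β k) (γ k)) W ≤ 0

/-- Feasibility in the LP relaxation: `W̄` symmetric, `W̄_{ii} ≥ 0`,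
`W̄_{ii} + W̄_{jj} − 2|W̄_{ij}| ≥ 0`, `W̄_{00} = 1`, and `Q̄ₖ • W̄ ≤ 0`. -/
noncomputable def LPfeas {n m : ℕ} (Q : Fin m → Matrix (Fin n) (Fin n) ℝ)
    (β : Fin m → Fin n → ℝ) (γ : Fin m → ℝ)
    (W : Matrix (Fin 1 ⊕ Fin n) (Fin 1 ⊕ Fin n) ℝ) : Prop :=
  W.IsSymm ∧ (∀ i, 0 ≤ W i i) ∧
    (∀ i j, 0 ≤ W i i + W j j - 2 * |W i j|) ∧
    W (Sum.inl 0) (Sum.inl 0) = 1 ∧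
    ∀ k, minner (Qbar (Q k) (β k) (γ k)) W ≤ 0

/-! ### Auxiliary material -/

/-- The block matrix `[[0,0],[0,I]]` used to fix up the diagonal. -/
noncomputable def Ebig (n : ℕ) : Matrix (Fin 1 ⊕ Fin n) (Fin 1 ⊕ Fin n) ℝ :=
  Matrix.fromBlocks 0 0 0 1

lemma quad_expand {ι : Type*} [Fintype ι] (W : Matrix ι ι ℝ) (x : ι → ℝ) :
    x ⬝ᵥ W *ᵥ x = ∑ i, ∑ j, x i * W i j * x j := by
  simp [dotProduct, Matrix.mulVec, Finset.mul_sum, mul_assoc]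

lemma psd_diag {ι : Type*} [Fintype ι] [DecidableEq ι]
    {W : Matrix ι ι ℝ} (hW : W.PosSemidef) (i : ι) : 0 ≤ W i i := by
  simpa [Matrix.mulVec_single, single_dotProduct] using hW.dotProduct_mulVec_nonneg (Pi.single i 1)

lemma psd_entry_sq_le {ι : Type*} [Fintype ι] [DecidableEq ι]
    {W : Matrix ι ι ℝ} (hW : W.PosSemidef) (i j : ι) :
    (W i j) ^ 2 ≤ W i i * W j j := by
  have hsym : W j i = W i j := by
    have := congrFun (congrFun hW.1 i) j
    simpa [Matrix.conjTranspose_apply] using this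
  have key : ∀ t : ℝ, 0 ≤ W i i * (t * t) + (2 * W i j) * t + W j j := by
    intro t
    have h := hW.dotProduct_mulVec_nonneg (Pi.single i t + Pi.single j 1)
    simp only [star_trivial, Matrix.mulVec_add, Matrix.mulVec_single,
      dotProduct_add, add_dotProduct, single_dotProduct,
      Pi.add_apply, mul_one, Pi.smul_apply, Matrix.col_apply, op_smul_eq_mul, one_mul] at h
    rw [hsym] at h
    ring_nf at h ⊢
    linarith
  have hd := discrim_le_zero key
  rw [discrim] at hd
  nlinarith [hd]

lemma minner_add_smul {ι : Type*} [Fintype ι] (A W E : Matrix ι ι ℝ) (α : ℝ) :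
    minner A (W + α • E) = minner A W + α * minner A E := by
  simp [minner, Matrix.add_apply, Matrix.smul_apply, mul_add, Finset.sum_add_distrib,
    Finset.mul_sum, mul_left_comm]

lemma minner_Qbar_Ebig {n : ℕ} (Qm : Matrix (Fin n) (Fin n) ℝ) (b : Fin n → ℝ)
    (c : ℝ) (hd : ∀ i, Qm i i = 0) : minner (Qbar Qm b c) (Ebig n) = 0 := by
  simp [minner, Ebig, Qbar, Fintype.sum_sum_type, Matrix.one_apply, mul_ite,
    Finset.sum_ite_eq, hd]

lemma quad_split {n : ℕ} (W : Matrix (Fin 1 ⊕ Fin n) (Fin 1 ⊕ Fin n) ℝ)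
    (x : Fin 1 ⊕ Fin n → ℝ) :
    (∑ p, ∑ q, x p * W p q * x q)
    = x (Sum.inl 0) * W (Sum.inl 0) (Sum.inl 0) * x (Sum.inl 0)
      + (∑ j, x (Sum.inl 0) * W (Sum.inl 0) (Sum.inr j) * x (Sum.inr j))
      + (∑ i, x (Sum.inr i) * W (Sum.inr i) (Sum.inl 0) * x (Sum.inl 0))
      + ∑ i, ∑ j, x (Sum.inr i) * W (Sum.inr i) (Sum.inr j) * x (Sum.inr j) := by
  rw [Fintype.sum_sum_type]
  simp only [Fintype.sum_sum_type, Fin.sum_univ_one, Finset.sum_add_distrib]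
  ring

lemma ebig_quad {n : ℕ} (x : Fin 1 ⊕ Fin n → ℝ) (α : ℝ) :
    (∑ p, ∑ q, x p * (α • Ebig n) p q * x q) = α * ∑ j, x (Sum.inr j) ^ 2 := by
  rw [quad_split]
  simp [Ebig, Matrix.smul_apply, Matrix.one_apply, mul_ite, ite_mul,
    Finset.sum_ite_eq, Finset.mul_sum, pow_two]
  ring_nf
  congr 1
  ext j
  ring

lemma lp_to_psd {n : ℕ} (W : Matrix (Fin 1 ⊕ Fin n) (Fin 1 ⊕ Fin n) ℝ)
    (hsym : W.IsSymm) (h00 : W (Sum.inl 0) (Sum.inl 0) = 1) :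
    (W + (1 + (∑ j, W (Sum.inl 0) (Sum.inr j) ^ 2)
        + ∑ i, ∑ j, |W (Sum.inr i) (Sum.inr j)|) • Ebig n).PosSemidef := by
  set α : ℝ := 1 + (∑ j, W (Sum.inl 0) (Sum.inr j) ^ 2)
        + ∑ i, ∑ j, |W (Sum.inr i) (Sum.inr j)| with hα
  have hsym' : ∀ p q, W q p = W p q := by
    intro p q
    have := congrFun (congrFun hsym q) p
    simpa [Matrix.transpose_apply] using this.symm
  refine Matrix.PosSemidef.of_dotProduct_mulVec_nonneg ?_ ?_
  · ext p q
    simp only [Matrix.conjTranspose_apply, Matrix.add_apply, Matrix.smul_apply,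
      star_trivial, smul_eq_mul]
    rw [hsym' p q]
    congr 1
    rcases p with p | p <;> rcases q with q | q <;>
      simp [Ebig, Matrix.one_apply, eq_comm]
  · intro x
    rw [star_trivial, quad_expand]
    have hadd : ∀ p q, (W + α • Ebig n) p q = W p q + (α • Ebig n) p q := fun p q => rfl
    have expand : (∑ p, ∑ q, x p * (W + α • Ebig n) p q * x q)
        = (∑ p, ∑ q, x p * W p q * x q) + (∑ p, ∑ q, x p * (α • Ebig n) p q * x q) := by
      rw [← Finset.sum_add_distrib]
      refine Finset.sum_congr rfl fun p _ => ?_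
      rw [← Finset.sum_add_distrib]
      refine Finset.sum_congr rfl fun q _ => ?_
      rw [hadd]; ring
    rw [expand, ebig_quad, quad_split, h00]
    set x0 := x (Sum.inl 0) with hx0
    set N := ∑ j, x (Sum.inr j) ^ 2 with hN
    set T := ∑ j, W (Sum.inl 0) (Sum.inr j) * x (Sum.inr j) with hT
    set S1 := ∑ j, W (Sum.inl 0) (Sum.inr j) ^ 2 with hS1
    set B := ∑ i, ∑ j, |W (Sum.inr i) (Sum.inr j)| with hB
    have hNj : ∀ j, x (Sum.inr j) ^ 2 ≤ N :=
      fun j => Finset.single_le_sum (f := fun k => x (Sum.inr k) ^ 2)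
        (fun k _ => sq_nonneg _) (Finset.mem_univ j)
    have hN0 : 0 ≤ N := Finset.sum_nonneg fun k _ => sq_nonneg _
    have e1 : (∑ j, x0 * W (Sum.inl 0) (Sum.inr j) * x (Sum.inr j)) = x0 * T := by
      rw [hT, Finset.mul_sum]; exact Finset.sum_congr rfl fun j _ => by ring
    have e2 : (∑ i, x (Sum.inr i) * W (Sum.inr i) (Sum.inl 0) * x0) = x0 * T := by
      rw [hT, Finset.mul_sum]
      refine Finset.sum_congr rfl fun i _ => ?_
      rw [hsym' (Sum.inl 0) (Sum.inr i)]; ring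
    rw [e1, e2]
    have hT2 : T ^ 2 ≤ S1 * N := by
      have := Finset.sum_mul_sq_le_sq_mul_sq Finset.univ
        (fun j => W (Sum.inl 0) (Sum.inr j)) (fun j => x (Sum.inr j))
      simpa [hT, hS1, hN] using this
    have hSq : -(B * N) ≤ ∑ i, ∑ j, x (Sum.inr i) * W (Sum.inr i) (Sum.inr j) * x (Sum.inr j) := by
      have hterm : ∀ i j, -(|W (Sum.inr i) (Sum.inr j)| * N)
          ≤ x (Sum.inr i) * W (Sum.inr i) (Sum.inr j) * x (Sum.inr j) := by
        intro i j
        have habs : |x (Sum.inr i) * W (Sum.inr i) (Sum.inr j) * x (Sum.inr j)|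
            ≤ |W (Sum.inr i) (Sum.inr j)| * N := by
          rw [abs_mul, abs_mul]
          have hi := hNj i; have hj := hNj j
          nlinarith [abs_nonneg (x (Sum.inr i)), abs_nonneg (x (Sum.inr j)),
            abs_nonneg (W (Sum.inr i) (Sum.inr j)), sq_abs (x (Sum.inr i)),
            sq_abs (x (Sum.inr j)), sq_nonneg (|x (Sum.inr i)| - |x (Sum.inr j)|)]
        linarith [neg_abs_le (x (Sum.inr i) * W (Sum.inr i) (Sum.inr j) * x (Sum.inr j))]
      calc -(B * N) = ∑ i, ∑ j, -(|W (Sum.inr i) (Sum.inr j)| * N) := by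
            simp [hB, Finset.sum_mul, Finset.sum_neg_distrib]
        _ ≤ _ := Finset.sum_le_sum fun i _ =>
            Finset.sum_le_sum fun j _ => hterm i j
    have hcross : -(x0 ^ 2) - T ^ 2 ≤ 2 * (x0 * T) := by nlinarith [sq_nonneg (x0 + T)]
    have hαN : α * N = N + S1 * N + B * N := by rw [hα]; ring
    nlinarith [hT2, hSq, hcross, hN0]

lemma sdp_to_socp {n m : ℕ} {Q : Fin m → Matrix (Fin n) (Fin n) ℝ}
    {β : Fin m → Fin n → ℝ} {γ : Fin m → ℝ}
    {W : Matrix (Fin 1 ⊕ Fin n) (Fin 1 ⊕ Fin n) ℝ}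
    (h : SDPfeas Q β γ W) : SOCPfeas Q β γ W := by
  obtain ⟨hpsd, h00, hcons⟩ := h
  refine ⟨?_, fun i => psd_diag hpsd i, fun i j => psd_entry_sq_le hpsd i j, h00, hcons⟩
  ext p q
  have := congrFun (congrFun hpsd.1 p) q
  simpa [Matrix.conjTranspose_apply] using this

lemma socp_to_lp {n m : ℕ} {Q : Fin m → Matrix (Fin n) (Fin n) ℝ}
    {β : Fin m → Fin n → ℝ} {γ : Fin m → ℝ}
    {W : Matrix (Fin 1 ⊕ Fin n) (Fin 1 ⊕ Fin n) ℝ}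
    (h : SOCPfeas Q β γ W) : LPfeas Q β γ W := by
  obtain ⟨hsym, hd, hcs, h00, hcons⟩ := h
  refine ⟨hsym, hd, fun i j => ?_, h00, hcons⟩
  nlinarith [hcs i j, hd i, hd j, sq_abs (W i j), abs_nonneg (W i j),
    sq_nonneg (W i i - W j j), sq_nonneg (W i i + W j j - 2 * |W i j|)]

lemma lp_to_sdp {n m : ℕ} {Q : Fin m → Matrix (Fin n) (Fin n) ℝ}
    {β : Fin m → Fin n → ℝ} {γ : Fin m → ℝ}
    (Q0 : Matrix (Fin n) (Fin n) ℝ) (β0 : Fin n → ℝ) (γ0 : ℝ)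
    (hdiag0 : ∀ i, Q0 i i = 0) (hdiag : ∀ k i, Q k i i = 0)
    {W : Matrix (Fin 1 ⊕ Fin n) (Fin 1 ⊕ Fin n) ℝ}
    (h : LPfeas Q β γ W) :
    ∃ W', SDPfeas Q β γ W' ∧
      minner (Qbar Q0 β0 γ0) W' = minner (Qbar Q0 β0 γ0) W := by
  obtain ⟨hsym, hd, hdd, h00, hcons⟩ := h
  set α : ℝ := 1 + (∑ j, W (Sum.inl 0) (Sum.inr j) ^ 2)
        + ∑ i, ∑ j, |W (Sum.inr i) (Sum.inr j)| with hα
  refine ⟨W + α • Ebig n, ⟨lp_to_psd W hsym h00, ?_, fun k => ?_⟩, ?_⟩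
  · simp [Matrix.add_apply, Matrix.smul_apply, Ebig, h00]
  · rw [minner_add_smul, minner_Qbar_Ebig _ _ _ (hdiag k)]
    simpa using hcons k
  · rw [minner_add_smul, minner_Qbar_Ebig _ _ _ hdiag0]
    simp

/-- Theorem 4.1: for a QCQP whose matrices `Q₀, Q₁, …, Qₘ` all have zero
diagonals, the optimal values of the SDP, SOCP and LP relaxations coincide:
`ζ*_SDP = ζ*_SOCP = ζ*_LP`. -/
theorem stmt_11 {n m : ℕ}
    (Q0 : Matrix (Fin n) (Fin n) ℝ) (β0 : Fin n → ℝ) (γ0 : ℝ)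
    (Q : Fin m → Matrix (Fin n) (Fin n) ℝ) (β : Fin m → Fin n → ℝ)
    (γ : Fin m → ℝ)
    (hsymm0 : Q0.IsSymm) (hsymm : ∀ k, (Q k).IsSymm)
    (hdiag0 : ∀ i, Q0 i i = 0) (hdiag : ∀ k i, Q k i i = 0) :
    sInf {v : EReal | ∃ W, SDPfeas Q β γ W ∧
        v = (minner (Qbar Q0 β0 γ0) W : ℝ)} =
      sInf {v : EReal | ∃ W, SOCPfeas Q β γ W ∧
        v = (minner (Qbar Q0 β0 γ0) W : ℝ)} ∧
    sInf {v : EReal | ∃ W, SOCPfeas Q β γ W ∧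
        v = (minner (Qbar Q0 β0 γ0) W : ℝ)} =
      sInf {v : EReal | ∃ W, LPfeas Q β γ W ∧
        v = (minner (Qbar Q0 β0 γ0) W : ℝ)} := by
  have hAB : {v : EReal | ∃ W, SDPfeas Q β γ W ∧ v = (minner (Qbar Q0 β0 γ0) W : ℝ)}
      ⊆ {v : EReal | ∃ W, SOCPfeas Q β γ W ∧ v = (minner (Qbar Q0 β0 γ0) W : ℝ)} := by
    rintro v ⟨W, hW, rfl⟩
    exact ⟨W, sdp_to_socp hW, rfl⟩
  have hBC : {v : EReal | ∃ W, SOCPfeas Q β γ W ∧ v = (minner (Qbar Q0 β0 γ0) W : ℝ)}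
      ⊆ {v : EReal | ∃ W, LPfeas Q β γ W ∧ v = (minner (Qbar Q0 β0 γ0) W : ℝ)} := by
    rintro v ⟨W, hW, rfl⟩
    exact ⟨W, socp_to_lp hW, rfl⟩
  have hCA : {v : EReal | ∃ W, LPfeas Q β γ W ∧ v = (minner (Qbar Q0 β0 γ0) W : ℝ)}
      ⊆ {v : EReal | ∃ W, SDPfeas Q β γ W ∧ v = (minner (Qbar Q0 β0 γ0) W : ℝ)} := by
    rintro v ⟨W, hW, rfl⟩
    obtain ⟨W', hW', hval⟩ := lp_to_sdp Q0 β0 γ0 hdiag0 hdiag hW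
    exact ⟨W', hW', by rw [hval]⟩
  have h1 : {v : EReal | ∃ W, SDPfeas Q β γ W ∧ v = (minner (Qbar Q0 β0 γ0) W : ℝ)}
      = {v : EReal | ∃ W, SOCPfeas Q β γ W ∧ v = (minner (Qbar Q0 β0 γ0) W : ℝ)} :=
    Set.Subset.antisymm hAB (hBC.trans hCA)
  have h2 : {v : EReal | ∃ W, SOCPfeas Q β γ W ∧ v = (minner (Qbar Q0 β0 γ0) W : ℝ)}
      = {v : EReal | ∃ W, LPfeas Q β γ W ∧ v = (minner (Qbar Q0 β0 γ0) W : ℝ)} :=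
    Set.Subset.antisymm hBC (hCA.trans hAB)
  exact ⟨by rw [h1], by rw [h2]⟩
end

section
/- Under the zero-diagonal assumption on Q₀, …, Qₘ, the dual SDP problem max{μ : Q̄₀ + Σₖ ηₖ Q̄ₖ − μH̄₀ = S̄, ηₖ ≥ 0, S̄ ⪰ 0} is equivalent to the linear program max{μ : γ₀ + Σₖ ηₖγₖ − μ ≥ 0, β₀ + Σₖ ηₖβₖ = 0, Q₀ + Σₖ ηₖQₖ = 0, ηₖ ≥ 0}. -/
open Matrix Finset

lemma psd_row_eq_zero {N : Type*} [Fintype N] [DecidableEq N]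
    {A : Matrix N N ℝ} (hA : A.PosSemidef) {i : N} (hii : A i i = 0) :
    ∀ j, A i j = 0 := by
  have h0 : star (Pi.single i (1:ℝ)) ⬝ᵥ A *ᵥ Pi.single i 1 = 0 := by
    simp [mulVec_single, dotProduct, Pi.single_apply, hii]
  have hv := (hA.dotProduct_mulVec_zero_iff (Pi.single i 1)).mp h0
  intro j
  have hcol : A j i = 0 := by
    have := congrFun hv j
    simpa [mulVec_single] using this
  have := hA.isHermitian.apply j i
  simp only [star_trivial] at this
  rw [this, hcol]

/-- `H̄₀`: the matrix with `1` in the `(0,0)` entry and zeros elsewhere. -/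
noncomputable def Hbar (n : ℕ) : Matrix (Fin 1 ⊕ Fin n) (Fin 1 ⊕ Fin n) ℝ :=
  Matrix.fromBlocks (Matrix.of fun _ _ => 1) 0 0 0

/-- Under the zero-diagonal assumption on `Q₀, …, Qₘ`, the dual SDP
`max{μ : Q̄₀ + Σₖ ηₖQ̄ₖ − μH̄₀ = S̄ ⪰ 0, η ≥ 0}` is equivalent to the linear
program `max{μ : γ₀ + Σₖηₖγₖ − μ ≥ 0, β₀ + Σₖηₖβₖ = 0, Q₀ + ΣₖηₖQₖ = 0, η ≥ 0}`:
they admit exactly the same feasible values `μ`. -/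
theorem stmt_15 {n m : ℕ}
    (Q0 : Matrix (Fin n) (Fin n) ℝ) (β0 : Fin n → ℝ) (γ0 : ℝ)
    (Q : Fin m → Matrix (Fin n) (Fin n) ℝ) (β : Fin m → Fin n → ℝ)
    (γ : Fin m → ℝ)
    (hsymm0 : Q0.IsSymm) (hsymm : ∀ k, (Q k).IsSymm)
    (hdiag0 : ∀ i, Q0 i i = 0) (hdiag : ∀ k i, Q k i i = 0) :
    ∀ μ : ℝ,
      (∃ η : Fin m → ℝ, (∀ k, 0 ≤ η k) ∧
        (Qbar Q0 β0 γ0 + ∑ k, η k • Qbar (Q k) (β k) (γ k) -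
          μ • Hbar n).PosSemidef) ↔
      (∃ η : Fin m → ℝ, (∀ k, 0 ≤ η k) ∧
        0 ≤ γ0 + ∑ k, η k * γ k - μ ∧
        β0 + ∑ k, η k • β k = 0 ∧
        Q0 + ∑ k, η k • Q k = 0) := by
  intro μ
  constructor
  · rintro ⟨η, hη, hS⟩
    set S := Qbar Q0 β0 γ0 + ∑ k, η k • Qbar (Q k) (β k) (γ k) - μ • Hbar n with hSdef
    have hS11 : ∀ i j : Fin n, S (Sum.inr i) (Sum.inr j) = Q0 i j + ∑ k, η k * Q k i j := by
      intro i j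
      simp [hSdef, Qbar, Hbar, Matrix.sub_apply, Matrix.add_apply, Matrix.sum_apply,
        Matrix.smul_apply]
    have hS10 : ∀ i : Fin n, S (Sum.inr i) (Sum.inl 0) = β0 i / 2 + ∑ k, η k * (β k i / 2) := by
      intro i
      simp [hSdef, Qbar, Hbar, Matrix.sub_apply, Matrix.add_apply, Matrix.sum_apply,
        Matrix.smul_apply]
    have hS00 : S (Sum.inl 0) (Sum.inl 0) = γ0 + ∑ k, η k * γ k - μ := by
      simp [hSdef, Qbar, Hbar, Matrix.sub_apply, Matrix.add_apply, Matrix.sum_apply,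
        Matrix.smul_apply]
    have hrow : ∀ i : Fin n, ∀ j, S (Sum.inr i) j = 0 := by
      intro i
      apply psd_row_eq_zero hS
      rw [hS11]
      simp [hdiag0, hdiag]
    refine ⟨η, hη, ?_, ?_, ?_⟩
    · have := hS.dotProduct_mulVec_nonneg (Pi.single (Sum.inl (0 : Fin 1)) (1 : ℝ))
      rw [← hS00]
      simpa [mulVec_single, dotProduct, Pi.single_apply] using this
    · funext i
      have h := hrow i (Sum.inl 0)
      rw [hS10] at h
      have hsum : ∑ k, η k * (β k i / 2) = (∑ k, η k * β k i) / 2 := by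
        rw [Finset.sum_div]
        exact Finset.sum_congr rfl fun k _ => by ring
      rw [hsum] at h
      simp [Finset.sum_apply, Pi.smul_apply, smul_eq_mul]
      linarith
    · funext i j
      have h := hrow i (Sum.inr j)
      rw [hS11] at h
      simpa [Matrix.sum_apply, Matrix.smul_apply, smul_eq_mul] using h
  · rintro ⟨η, hη, hc, hβ, hQ⟩
    refine ⟨η, hη, ?_⟩
    have hβ' : ∀ i, β0 i + ∑ k, η k * β k i = 0 := by
      intro i
      have := congrFun hβ i
      simpa [Finset.sum_apply, Pi.smul_apply, smul_eq_mul] using this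
    have hQ' : ∀ i j, Q0 i j + ∑ k, η k * Q k i j = 0 := by
      intro i j
      have := congrFun (congrFun hQ i) j
      simpa [Matrix.sum_apply, Matrix.smul_apply, smul_eq_mul] using this
    have key : Qbar Q0 β0 γ0 + ∑ k, η k • Qbar (Q k) (β k) (γ k) - μ • Hbar n =
        Matrix.diagonal (Sum.elim (fun _ : Fin 1 => γ0 + ∑ k, η k * γ k - μ)
          (fun _ : Fin n => 0)) := by
      ext i j
      rcases i with a | i <;> rcases j with b | j
      · have : a = b := Subsingleton.elim a b
        subst this
        simp [Qbar, Hbar, Matrix.sub_apply, Matrix.add_apply, Matrix.sum_apply,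
          Matrix.smul_apply, Matrix.diagonal_apply]
      · have hsum : ∑ k, η k * (β k j / 2) = (∑ k, η k * β k j) / 2 := by
          rw [Finset.sum_div]
          exact Finset.sum_congr rfl fun k _ => by ring
        simp [Qbar, Hbar, Matrix.sub_apply, Matrix.add_apply, Matrix.sum_apply,
          Matrix.smul_apply, Matrix.diagonal_apply, hsum]
        linarith [hβ' j]
      · have hsum : ∑ k, η k * (β k i / 2) = (∑ k, η k * β k i) / 2 := by
          rw [Finset.sum_div]
          exact Finset.sum_congr rfl fun k _ => by ring
        simp [Qbar, Hbar, Matrix.sub_apply, Matrix.add_apply, Matrix.sum_apply,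
          Matrix.smul_apply, Matrix.diagonal_apply, hsum]
        linarith [hβ' i]
      · simp [Qbar, Hbar, Matrix.sub_apply, Matrix.add_apply, Matrix.sum_apply,
          Matrix.smul_apply, Matrix.diagonal_apply, Sum.inr.injEq]
        rcases eq_or_ne i j with rfl | hij
        · simpa using hQ' i i
        · simpa using hQ' i j
    rw [key]
    apply Matrix.PosSemidef.diagonal
    intro x
    rcases x with a | i <;> simp [hc]
end
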